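/- arXiv:1608.08261 — 2 statements merged into one kernel-verified Lean document; each statement's English description precedes it below -/
import Mathlib

section
/- Let 0 < D1 < D2 be real numbers. The supremum over all natural numbers n such that there exists an Interference Set Cover of cardinality n equals the supremum over all natural numbers n such that there exist n points x_1, …, x_n in ℝ² whose open balls of radius D1/2 are pairwise disjoint, each disjoint from the open ball of radius D1/2 centered at the origin, and each contained in the closed ball of radius D2 + D1/2 centered at the origin. In words, the maximum cardinality of an Interference Set Cover equals the solution of the Pack Problem. -/
open Metric

lemma ball_subset_closedBall_iff_aux (x : EuclideanSpace ℝ (Fin 2)) (r R : ℝ) (hr : 0 < r) :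
    ball x r ⊆ closedBall (0 : EuclideanSpace ℝ (Fin 2)) (R + r) ↔ ‖x‖ ≤ R := by
  constructor
  · intro h
    have h2 : closedBall x r ⊆ closedBall (0 : EuclideanSpace ℝ (Fin 2)) (R + r) := by
      rw [← closure_ball x hr.ne']
      exact closure_minimal h isClosed_closedBall
    rcases eq_or_ne x 0 with rfl | hx
    · have hmem : EuclideanSpace.single (0 : Fin 2) r ∈
          closedBall (0 : EuclideanSpace ℝ (Fin 2)) (R + r) := by
        apply h2
        simp [mem_closedBall, dist_zero_right, EuclideanSpace.norm_single, abs_of_pos hr]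
      simp only [mem_closedBall, dist_zero_right, EuclideanSpace.norm_single,
        abs_of_pos hr, Real.norm_eq_abs, abs_of_pos hr] at hmem
      simpa using by linarith
    · set y := x + (r / ‖x‖) • x with hy
      have hnx : 0 < ‖x‖ := norm_pos_iff.mpr hx
      have hyx : y = (1 + r / ‖x‖) • x := by rw [hy, add_smul, one_smul]
      have hdy : dist y x = r := by
        rw [hy, dist_eq_norm, add_sub_cancel_left, norm_smul]
        simp [abs_of_nonneg (div_nonneg hr.le hnx.le), div_mul_cancel₀, hnx.ne', hr.le]
      have hyb : y ∈ closedBall (0 : EuclideanSpace ℝ (Fin 2)) (R + r) := by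
        apply h2
        rw [mem_closedBall, hdy]
      have hny : ‖y‖ = ‖x‖ + r := by
        have h1 : (0:ℝ) ≤ 1 + r / ‖x‖ := by positivity
        rw [hyx, norm_smul, Real.norm_eq_abs, abs_of_nonneg h1]
        field_simp
      simp only [mem_closedBall, dist_zero_right, hny] at hyb
      linarith
  · intro h z hz
    simp only [mem_ball] at hz
    simp only [mem_closedBall, dist_zero_right]
    calc ‖z‖ ≤ ‖z - x‖ + ‖x‖ := by have := norm_le_insert' z x; linarith
    _ ≤ r + R := by
        have : dist z x < r := hz
        rw [dist_eq_norm] at this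
        linarith
    _ = R + r := by ring

/-- The maximum cardinality of an Interference Set Cover equals the solution of
the Pack Problem: the supremum of cardinalities of finite sets of points whose
norms lie in `[D1, D2]` and which are pairwise at distance at least `D1` equals
the supremum of the numbers of points whose open balls of radius `D1/2` can be
packed, pairwise disjointly, in the annulus with inner radius `D1/2` and outer
radius `D2 + D1/2` around the origin. -/
theorem maxCard_interferenceSetCover_eq_packProblem (D1 D2 : ℝ) (hD1 : 0 < D1) (hD12 : D1 < D2) :
    sSup {n : ℕ | ∃ S : Finset (EuclideanSpace ℝ (Fin 2)), S.card = n ∧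
        (∀ x ∈ S, D1 ≤ ‖x‖ ∧ ‖x‖ ≤ D2) ∧
        (S : Set (EuclideanSpace ℝ (Fin 2))).Pairwise fun x y => D1 ≤ dist x y}
      = sSup {n : ℕ | ∃ T : Finset (EuclideanSpace ℝ (Fin 2)), T.card = n ∧
          ((T : Set (EuclideanSpace ℝ (Fin 2))).Pairwise fun x y =>
            Disjoint (ball x (D1 / 2)) (ball y (D1 / 2))) ∧
          (∀ x ∈ T, Disjoint (ball x (D1 / 2)) (ball (0 : EuclideanSpace ℝ (Fin 2)) (D1 / 2))) ∧
          (∀ x ∈ T, ball x (D1 / 2) ⊆ closedBall (0 : EuclideanSpace ℝ (Fin 2)) (D2 + D1 / 2))} := by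
  have hr : (0:ℝ) < D1 / 2 := by linarith
  have hdisj : ∀ x y : EuclideanSpace ℝ (Fin 2),
      Disjoint (ball x (D1 / 2)) (ball y (D1 / 2)) ↔ D1 ≤ dist x y := by
    intro x y
    rw [disjoint_ball_ball_iff hr hr]
    constructor <;> intro h <;> linarith
  congr 1
  ext n
  constructor
  · rintro ⟨S, hcard, hnorm, hpair⟩
    refine ⟨S, hcard, ?_, ?_, ?_⟩
    · intro x hx y hy hxy
      exact (hdisj x y).mpr (hpair hx hy hxy)
    · intro x hx
      rw [hdisj]
      simpa using (hnorm x hx).1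
    · intro x hx
      exact (ball_subset_closedBall_iff_aux x (D1/2) D2 hr).mpr (hnorm x hx).2
  · rintro ⟨T, hcard, hpair, hd0, hsub⟩
    refine ⟨T, hcard, ?_, ?_⟩
    · intro x hx
      constructor
      · have := (hdisj x 0).mp (hd0 x hx)
        simpa using this
      · exact (ball_subset_closedBall_iff_aux x (D1/2) D2 hr).mp (hsub x hx)
    · intro x hx y hy hxy
      exact (hdisj x y).mp (hpair hx hy hxy)
end

section
/- Let 0 < D1 ≤ D2 be real numbers, let 0 < d < D1, let η > 0, and let K = ⌊D2/D1⌋. Let S be a finite set of real numbers such that every x ∈ S satisfies D1 ≤ |x| ≤ D2 and any two distinct elements of S differ in absolute value of their difference by at least D1 (i.e., |x - y| ≥ D1 for distinct x, y ∈ S). Then the total interference power at the receiver located at coordinate d satisfies ∑_{x ∈ S} |x - d|^{-η} ≤ ∑_{k=1}^{K} ((k·D1 - d)^{-η} + (k·D1 + d)^{-η}). In words, the maximum expected intra-flow interference power is achieved by interferers located at distances D1, 2·D1, …, K·D1 from the transmitter on both sides along the line of the flow. -/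
private lemma side_bound (D1 D2 c η : ℝ) (hD1 : 0 < D1) (hc : c < D1) (hη : 0 < η)
    (T : Finset ℝ) (hmem : ∀ x ∈ T, D1 ≤ x ∧ x ≤ D2)
    (hsep : (T : Set ℝ).Pairwise fun x y => D1 ≤ |x - y|) :
    ∑ x ∈ T, |x - c| ^ (-η)
      ≤ ∑ k ∈ Finset.Icc 1 ⌊D2 / D1⌋₊, ((k : ℝ) * D1 - c) ^ (-η) := by
  set f : ℝ → ℕ := fun x => ⌊x / D1⌋₊ with hf
  have hlow : ∀ x ∈ T, (f x : ℝ) * D1 ≤ x := by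
    intro x hx
    have h0 : 0 ≤ x / D1 := div_nonneg (le_trans hD1.le (hmem x hx).1) hD1.le
    have := Nat.floor_le h0
    calc (f x : ℝ) * D1 ≤ (x / D1) * D1 := by nlinarith
      _ = x := div_mul_cancel₀ x hD1.ne'
  have hup : ∀ x ∈ T, x < ((f x : ℝ) + 1) * D1 := by
    intro x hx
    have := Nat.lt_floor_add_one (x / D1)
    calc x = (x / D1) * D1 := (div_mul_cancel₀ x hD1.ne').symm
      _ < ((f x : ℝ) + 1) * D1 := by nlinarith
  have hone : ∀ x ∈ T, 1 ≤ f x := by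
    intro x hx
    exact Nat.le_floor (by rw [Nat.cast_one, le_div_iff₀ hD1, one_mul]; exact (hmem x hx).1)
  have hmemIcc : ∀ x ∈ T, f x ∈ Finset.Icc 1 ⌊D2 / D1⌋₊ := by
    intro x hx
    exact Finset.mem_Icc.mpr ⟨hone x hx,
      Nat.floor_le_floor ((div_le_div_iff_of_pos_right hD1).mpr (hmem x hx).2)⟩
  have hinj : Set.InjOn f T := by
    intro x hx y hy hxy
    by_contra hne
    have hD1xy := hsep hx hy hne
    have h1 := hlow x hx
    have h2 := hlow y hy
    have h3 := hup x hx
    have h4 := hup y hy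
    rw [hxy] at h1 h3
    have : |x - y| < D1 := abs_sub_lt_iff.mpr ⟨by linarith, by linarith⟩
    linarith
  have hpos : ∀ x ∈ T, 0 < (f x : ℝ) * D1 - c := by
    intro x hx
    have h1 : (1 : ℝ) ≤ (f x : ℝ) := by exact_mod_cast hone x hx
    nlinarith
  have hterm : ∀ x ∈ T, |x - c| ^ (-η) ≤ ((f x : ℝ) * D1 - c) ^ (-η) := by
    intro x hx
    have hxc : 0 < x - c := by
      have := (hmem x hx).1; linarith
    rw [abs_of_pos hxc]
    exact Real.rpow_le_rpow_of_nonpos (hpos x hx) (by linarith [hlow x hx]) (by linarith)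
  calc ∑ x ∈ T, |x - c| ^ (-η)
      ≤ ∑ x ∈ T, ((f x : ℝ) * D1 - c) ^ (-η) := Finset.sum_le_sum hterm
    _ = ∑ k ∈ T.image f, ((k : ℝ) * D1 - c) ^ (-η) := (Finset.sum_image (g := f) (f := fun k : ℕ => ((k:ℝ) * D1 - c) ^ (-η))
        (fun x hx y hy h => hinj hx hy h)).symm
    _ ≤ ∑ k ∈ Finset.Icc 1 ⌊D2 / D1⌋₊, ((k : ℝ) * D1 - c) ^ (-η) := by
        apply Finset.sum_le_sum_of_subset_of_nonneg
        · intro k hk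
          obtain ⟨x, hx, rfl⟩ := Finset.mem_image.mp hk
          exact hmemIcc x hx
        · intro k hk _
          have h1 : (1:ℝ) ≤ (k:ℝ) := by exact_mod_cast (Finset.mem_Icc.mp hk).1
          exact Real.rpow_nonneg (by nlinarith) _

/-- Intra-flow interference bound: with transmitter at `0` and receiver at
`d ∈ (0, D1)` on a line, and interferers `S ⊆ ℝ` with `D1 ≤ |x| ≤ D2` and
pairwise separation `|x - y| ≥ D1`, the total interference power satisfies
`∑_{x ∈ S} |x - d|^{-η} ≤ ∑_{k=1}^{K} ((k·D1 - d)^{-η} + (k·D1 + d)^{-η})`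
with `K = ⌊D2/D1⌋`, i.e. the maximum is achieved by interferers at distances
`D1, 2·D1, …, K·D1` on both sides of the transmitter. -/
theorem intraflow_interference_bound (D1 D2 d η : ℝ) (hD1 : 0 < D1) (hD12 : D1 ≤ D2)
    (hd0 : 0 < d) (hd1 : d < D1) (hη : 0 < η)
    (S : Finset ℝ)
    (hmem : ∀ x ∈ S, D1 ≤ |x| ∧ |x| ≤ D2)
    (hsep : (S : Set ℝ).Pairwise fun x y => D1 ≤ |x - y|) :
    ∑ x ∈ S, |x - d| ^ (-η)
      ≤ ∑ k ∈ Finset.Icc 1 ⌊D2 / D1⌋₊,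
          ((k * D1 - d) ^ (-η) + (k * D1 + d) ^ (-η)) := by
  classical
  set P := S.filter (fun x => 0 < x) with hP
  set N := S.filter (fun x => ¬ 0 < x) with hN
  have hsplit : ∑ x ∈ S, |x - d| ^ (-η)
      = ∑ x ∈ P, |x - d| ^ (-η) + ∑ x ∈ N, |x - d| ^ (-η) :=
    (Finset.sum_filter_add_sum_filter_not S _ _).symm
  -- positive part
  have hPle : ∑ x ∈ P, |x - d| ^ (-η)
      ≤ ∑ k ∈ Finset.Icc 1 ⌊D2 / D1⌋₊, ((k : ℝ) * D1 - d) ^ (-η) := by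
    apply side_bound D1 D2 d η hD1 hd1 hη
    · intro x hx
      obtain ⟨hxS, hxpos⟩ := Finset.mem_filter.mp hx
      have := hmem x hxS
      rwa [abs_of_pos hxpos] at this
    · exact hsep.mono (by rw [hP, Finset.coe_filter]; exact fun x hx => hx.1)
  -- negative part
  have hNle : ∑ x ∈ N, |x - d| ^ (-η)
      ≤ ∑ k ∈ Finset.Icc 1 ⌊D2 / D1⌋₊, ((k : ℝ) * D1 + d) ^ (-η) := by
    have hneg : ∀ x ∈ N, x < 0 := by
      intro x hx
      obtain ⟨hxS, hxn⟩ := Finset.mem_filter.mp hx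
      have h1 := (hmem x hxS).1
      rcases lt_or_eq_of_le (not_lt.mp hxn) with h | h
      · exact h
      · exfalso; subst h; simp at h1; linarith
    have himg : ∑ x ∈ N, |x - d| ^ (-η)
        = ∑ y ∈ N.image (fun x => -x), |y - (-d)| ^ (-η) := by
      rw [Finset.sum_image (by intro x _ y _ h; linarith [neg_injective h] )]
      · apply Finset.sum_congr rfl
        intro x _
        congr 1
        rw [show -x - (-d) = -(x - d) by ring, abs_neg]
    rw [himg]
    have hres := side_bound D1 D2 (-d) η hD1 (by linarith) hη (N.image (fun x => -x))
      (by
        intro y hy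
        obtain ⟨x, hx, rfl⟩ := Finset.mem_image.mp hy
        obtain ⟨hxS, _⟩ := Finset.mem_filter.mp hx
        have h := hmem x hxS
        rw [abs_of_neg (hneg x hx)] at h
        exact h)
      (by
        intro y hy z hz hyz
        simp only [Finset.coe_image, Set.mem_image, Finset.mem_coe] at hy hz
        obtain ⟨x, hx, rfl⟩ := hy
        obtain ⟨w, hw, rfl⟩ := hz
        have hxw : x ≠ w := fun h => hyz (by rw [h])
        have := hsep (Finset.mem_coe.mpr (Finset.mem_filter.mp hx).1)
          (Finset.mem_coe.mpr (Finset.mem_filter.mp hw).1) hxw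
        calc D1 ≤ |x - w| := this
          _ = |(-x) - (-w)| := by rw [show (-x) - (-w) = -(x - w) by ring, abs_neg])
    convert hres using 2 with k
    ring_nf
  rw [hsplit, Finset.sum_add_distrib]
  exact add_le_add hPle hNle
end
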